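/- Let K, M_X, M_Y be positive integers with M_X ≥ K. For d ∈ {0,1}, suppose Γ_X and Γ'_X are M_X×K column-stochastic real matrices of rank K; Γ_{Y,d} and Γ'_{Y,d} are M_Y×K column-stochastic real matrices; Λ_d and Λ'_d are K×K column-stochastic invertible real matrices; and both tuples satisfy the no-repeated-eigenvalue condition: for all k ≠ k' there exists a row index y with Γ_{Y,0}[y,k] ≠ Γ_{Y,0}[y,k'] and a row index y' with Γ_{Y,1}[y',k] ≠ Γ_{Y,1}[y',k'] (and likewise for the primed matrices). If for each d ∈ {0,1} and all indices y, x, z one has ∑_{k=1}^K Γ_{Y,d}[y,k]·Γ_X[x,k]·Λ_d[k,z] = ∑_{k=1}^K Γ'_{Y,d}[y,k]·Γ'_X[x,k]·Λ'_d[k,z], then there exists a permutation σ of {1,…,K} such that for all k and both d ∈ {0,1}: column k of Γ'_X equals column σ(k) of Γ_X, column k of Γ'_{Y,d} equals column σ(k) of Γ_{Y,d}, and row k of Λ'_d equals row σ(k) of Λ_d. -/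
import Mathlib


open Matrix Finset

/-- uniqueness up to permutation of the latent states in the
finite-mixture factorization `H_d[(y,x),z] = ∑ k Γ_{Y,d}[y,k] Γ_X[x,k] Λ_d[k,z]`. -/
theorem nmf_identification_up_to_permutation
    (K MX MY : ℕ) (hK : 0 < K) (hMY : 0 < MY) (hMX : K ≤ MX)
    (ΓX ΓX' : Matrix (Fin MX) (Fin K) ℝ)
    (ΓY ΓY' : Fin 2 → Matrix (Fin MY) (Fin K) ℝ)
    (Λ Λ' : Fin 2 → Matrix (Fin K) (Fin K) ℝ)
    -- column-stochasticity
    (hΓX_nonneg : ∀ x k, 0 ≤ ΓX x k) (hΓX_sum : ∀ k, ∑ x, ΓX x k = 1)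
    (hΓX'_nonneg : ∀ x k, 0 ≤ ΓX' x k) (hΓX'_sum : ∀ k, ∑ x, ΓX' x k = 1)
    (hΓY_nonneg : ∀ d y k, 0 ≤ ΓY d y k) (hΓY_sum : ∀ d k, ∑ y, ΓY d y k = 1)
    (hΓY'_nonneg : ∀ d y k, 0 ≤ ΓY' d y k) (hΓY'_sum : ∀ d k, ∑ y, ΓY' d y k = 1)
    (hΛ_nonneg : ∀ d k z, 0 ≤ Λ d k z) (hΛ_sum : ∀ d z, ∑ k, Λ d k z = 1)
    (hΛ'_nonneg : ∀ d k z, 0 ≤ Λ' d k z) (hΛ'_sum : ∀ d z, ∑ k, Λ' d k z = 1)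
    -- full rank conditions
    (hΓX_rank : ΓX.rank = K) (hΓX'_rank : ΓX'.rank = K)
    (hΛ_inv : ∀ d, IsUnit (Λ d)) (hΛ'_inv : ∀ d, IsUnit (Λ' d))
    -- no repeated eigenvalue
    (hnre : ∀ k k' : Fin K, k ≠ k' →
      (∃ y, ΓY 0 y k ≠ ΓY 0 y k') ∧ (∃ y', ΓY 1 y' k ≠ ΓY 1 y' k'))
    (hnre' : ∀ k k' : Fin K, k ≠ k' →
      (∃ y, ΓY' 0 y k ≠ ΓY' 0 y k') ∧ (∃ y', ΓY' 1 y' k ≠ ΓY' 1 y' k'))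
    -- the two factorizations give the same observed arrays
    (heq : ∀ (d : Fin 2) (y : Fin MY) (x : Fin MX) (z : Fin K),
      ∑ k, ΓY d y k * ΓX x k * Λ d k z = ∑ k, ΓY' d y k * ΓX' x k * Λ' d k z) :
    ∃ σ : Equiv.Perm (Fin K), ∀ k : Fin K,
      (∀ x, ΓX' x k = ΓX x (σ k)) ∧
      (∀ d y, ΓY' d y k = ΓY d y (σ k)) ∧
      (∀ d z, Λ' d k z = Λ d (σ k) z) := by
  classical
  -- ΓX is left-cancellable since it has full column rank
  have hinj : Function.Injective ΓX.mulVecLin := by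
    rw [← LinearMap.ker_eq_bot, ← Submodule.finrank_eq_zero (R := ℝ)]
    have h1 := LinearMap.finrank_range_add_finrank_ker ΓX.mulVecLin
    have h2 : Module.finrank ℝ (LinearMap.range ΓX.mulVecLin) = K := hΓX_rank
    have h3 : Module.finrank ℝ (Fin K → ℝ) = K := by simp
    omega
  have hcancel : ∀ (A B : Matrix (Fin K) (Fin K) ℝ), ΓX * A = ΓX * B → A = B := by
    intro A B h
    ext k j
    have hcols : ΓX.mulVecLin (fun i => A i j) = ΓX.mulVecLin (fun i => B i j) := by
      ext x
      have := congrFun (congrFun h x) j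
      simpa [Matrix.mulVecLin_apply, Matrix.mulVec, Matrix.mul_apply, dotProduct] using this
    exact congrFun (hinj hcols) k
  -- inverses of Λ'
  have hdet' : ∀ d, IsUnit (Λ' d).det := fun d => (Matrix.isUnit_iff_isUnit_det _).mp (hΛ'_inv d)
  have hmulinv : ∀ d, Λ' d * (Λ' d)⁻¹ = 1 := fun d => Matrix.mul_nonsing_inv _ (hdet' d)
  have hinvmul : ∀ d, (Λ' d)⁻¹ * Λ' d = 1 := fun d => Matrix.nonsing_inv_mul _ (hdet' d)
  -- the basic matrix identity
  have hM : ∀ (d : Fin 2) (y : Fin MY),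
      ΓX * Matrix.diagonal (fun k => ΓY d y k) * Λ d
        = ΓX' * Matrix.diagonal (fun k => ΓY' d y k) * Λ' d := by
    intro d y
    ext x z
    rw [Matrix.mul_apply, Matrix.mul_apply]
    simp only [Matrix.mul_diagonal]
    calc ∑ j, ΓX x j * ΓY d y j * Λ d j z
        = ∑ j, ΓY d y j * ΓX x j * Λ d j z := Finset.sum_congr rfl fun j _ => by ring
      _ = ∑ j, ΓY' d y j * ΓX' x j * Λ' d j z := heq d y x z
      _ = ∑ j, ΓX' x j * ΓY' d y j * Λ' d j z := Finset.sum_congr rfl fun j _ => by ring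
  -- summing over y
  have hdiagsum : ∀ (G : Matrix (Fin MY) (Fin K) ℝ), (∀ k, ∑ y, G y k = 1) →
      ∑ y, Matrix.diagonal (fun k => G y k) = (1 : Matrix (Fin K) (Fin K) ℝ) := by
    intro G hsum
    ext k j
    by_cases h : k = j
    · subst h
      simp [Matrix.sum_apply, Matrix.diagonal, hsum k]
    · simp [Matrix.sum_apply, Matrix.diagonal_apply_ne _ h, Matrix.one_apply_ne h]
  have hB : ∀ d, ΓX * Λ d = ΓX' * Λ' d := by
    intro d
    have h1 : ∑ y, (ΓX * Matrix.diagonal (fun k => ΓY d y k) * Λ d)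
            = ∑ y, (ΓX' * Matrix.diagonal (fun k => ΓY' d y k) * Λ' d) :=
      Finset.sum_congr rfl fun y _ => hM d y
    rw [← Matrix.sum_mul, ← Matrix.sum_mul, ← Matrix.mul_sum, ← Matrix.mul_sum,
      hdiagsum _ (fun k => hΓY_sum d k), hdiagsum _ (fun k => hΓY'_sum d k),
      Matrix.mul_one, Matrix.mul_one] at h1
    exact h1
  -- ΓX' = ΓX * R d
  have hΓX'R : ∀ d, ΓX' = ΓX * (Λ d * (Λ' d)⁻¹) := by
    intro d
    have := congrArg (· * (Λ' d)⁻¹) (hB d)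
    simp only [Matrix.mul_assoc] at this
    rw [hmulinv d, Matrix.mul_one] at this
    exact this.symm
  have hRR : Λ 1 * (Λ' 1)⁻¹ = Λ 0 * (Λ' 0)⁻¹ := by
    apply hcancel
    rw [← hΓX'R 1, ← hΓX'R 0]
  have hR : ∀ d, Λ d * (Λ' d)⁻¹ = Λ 0 * (Λ' 0)⁻¹ := by
    intro d
    fin_cases d
    · rfl
    · exact hRR
  have hΓX'0 : ΓX' = ΓX * (Λ 0 * (Λ' 0)⁻¹) := hΓX'R 0
  set Rm : Matrix (Fin K) (Fin K) ℝ := Λ 0 * (Λ' 0)⁻¹ with hRmdef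
  -- commutation relation
  have hDR : ∀ (d : Fin 2) (y : Fin MY),
      Matrix.diagonal (fun k => ΓY d y k) * Rm = Rm * Matrix.diagonal (fun k => ΓY' d y k) := by
    intro d y
    have h1 : ΓX * (Matrix.diagonal (fun k => ΓY d y k) * Λ d)
        = ΓX * (Rm * (Matrix.diagonal (fun k => ΓY' d y k) * Λ' d)) := by
      have := hM d y
      rw [hΓX'R d, hR d] at this
      simpa [Matrix.mul_assoc] using this
    have h2 := hcancel _ _ h1
    calc Matrix.diagonal (fun k => ΓY d y k) * Rm
        = Matrix.diagonal (fun k => ΓY d y k) * Λ d * (Λ' d)⁻¹ := by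
          rw [Matrix.mul_assoc, hR d]
      _ = Rm * ((Matrix.diagonal (fun k => ΓY' d y k)) * Λ' d) * (Λ' d)⁻¹ := by rw [h2]
      _ = Rm * Matrix.diagonal (fun k => ΓY' d y k) * (Λ' d * (Λ' d)⁻¹) := by
          simp only [Matrix.mul_assoc]
      _ = Rm * Matrix.diagonal (fun k => ΓY' d y k) := by rw [hmulinv d, Matrix.mul_one]
  have hE : ∀ (d : Fin 2) (y : Fin MY) (k j : Fin K),
      ΓY d y k * Rm k j = Rm k j * ΓY' d y j := by
    intro d y k j
    have := congrFun (congrFun (hDR d y) k) j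
    simpa [Matrix.diagonal_mul, Matrix.mul_diagonal] using this
  have hdiv : ∀ (d : Fin 2) (y : Fin MY) (k j : Fin K), Rm k j ≠ 0 →
      ΓY d y k = ΓY' d y j := by
    intro d y k j hne
    have := hE d y k j
    rw [mul_comm (Rm k j) (ΓY' d y j)] at this
    exact mul_right_cancel₀ hne this
  -- entries of ΓX'
  have hΓX'E : ∀ x j, ΓX' x j = ∑ k, ΓX x k * Rm k j := by
    intro x j
    rw [hΓX'0]
    simp [Matrix.mul_apply]
  have hcolsum : ∀ j, ∑ k, Rm k j = 1 := by
    intro j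
    have h1 : ∑ x, ΓX' x j = ∑ k, Rm k j := by
      calc ∑ x, ΓX' x j = ∑ x, ∑ k, ΓX x k * Rm k j :=
            Finset.sum_congr rfl fun x _ => hΓX'E x j
        _ = ∑ k, ∑ x, ΓX x k * Rm k j := Finset.sum_comm
        _ = ∑ k, (∑ x, ΓX x k) * Rm k j := by simp [Finset.sum_mul]
        _ = ∑ k, Rm k j := by simp [hΓX_sum]
    rw [← h1, hΓX'_sum]
  -- each row/column of Rm has at most one nonzero entry
  have hrow : ∀ k j j', Rm k j ≠ 0 → Rm k j' ≠ 0 → j = j' := by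
    intro k j j' h h'
    by_contra hne
    obtain ⟨⟨y, hy⟩, -⟩ := hnre' j j' hne
    exact hy ((hdiv 0 y k j h).symm.trans (hdiv 0 y k j' h'))
  have hcol : ∀ k k' j, Rm k j ≠ 0 → Rm k' j ≠ 0 → k = k' := by
    intro k k' j h h'
    by_contra hne
    obtain ⟨⟨y, hy⟩, -⟩ := hnre k k' hne
    exact hy ((hdiv 0 y k j h).trans (hdiv 0 y k' j h').symm)
  have hex : ∀ j, ∃ k, Rm k j ≠ 0 := by
    intro j
    by_contra h
    push_neg at h
    have := hcolsum j
    rw [Finset.sum_eq_zero (fun k _ => h k)] at this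
    norm_num at this
  set π : Fin K → Fin K := fun j => (hex j).choose with hπdef
  have hπ : ∀ j, Rm (π j) j ≠ 0 := fun j => (hex j).choose_spec
  have hπinj : Function.Injective π := by
    intro j j' h
    exact hrow (π j) j j' (hπ j) (by rw [h]; exact hπ j')
  have hRunique : ∀ k j, Rm k j ≠ 0 → k = π j := fun k j h => hcol k (π j) j h (hπ j)
  have hRone : ∀ j, Rm (π j) j = 1 := by
    intro j
    have h := hcolsum j
    rwa [Finset.sum_eq_single (π j)
      (fun k _ hk => by by_contra h'; exact hk (hRunique k j h'))
      (fun h' => absurd (Finset.mem_univ _) h')] at h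
  have hRval : ∀ k j, Rm k j = if k = π j then 1 else 0 := by
    intro k j
    by_cases h : k = π j
    · rw [h, hRone, if_pos rfl]
    · rw [if_neg h]
      by_contra h'
      exact h (hRunique k j h')
  refine ⟨Equiv.ofBijective π (Finite.injective_iff_bijective.mp hπinj), ?_⟩
  intro j
  simp only [Equiv.ofBijective_apply]
  refine ⟨?_, ?_, ?_⟩
  · intro x
    rw [hΓX'E x j, Finset.sum_congr rfl (fun k _ => by rw [hRval k j])]
    simp [Finset.sum_ite_eq', mul_ite]
  · intro d y
    have h := hE d y (π j) j
    rw [hRone j] at h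
    simpa using h.symm
  · intro d z
    have hΛeq : Rm * Λ' d = Λ d := by
      rw [← hR d, Matrix.mul_assoc, hinvmul d, Matrix.mul_one]
    have h := congrFun (congrFun hΛeq (π j)) z
    rw [Matrix.mul_apply] at h
    rw [Finset.sum_eq_single j
      (fun m _ hm => by
        have : Rm (π j) m = 0 := by
          by_contra h'
          exact hm (hrow (π j) m j h' (hπ j))
        rw [this, zero_mul])
      (fun h' => absurd (Finset.mem_univ _) h')] at h
    rw [hRone j, one_mul] at h
    exact h
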